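/- arXiv:1804.10411 — 2 statements merged into one kernel-verified Lean document; each statement's English description precedes it below -/
import Mathlib

section
/- Consider S > 1 agents with pairwise distinct positive bids c : Fin S → ℝ running the CBAA-M algorithm over a fully connected communication graph. The shared state after iteration κ is a pair of vectors (v^κ, w^κ) of length S, initialized as v^0 = w^0 = 0. At iteration κ, each agent i whose index does not yet appear in v^{κ-1} proposes itself at the least position j such that c i > w^{κ-1}_j; then, for every position j, w^κ_j is set to the maximum of w^{κ-1}_j and all bids c i proposed at position j, and v^κ_j is set to the index of the corresponding maximizing agent (unchanged if no proposal exceeds w^{κ-1}_j). Then after exactly S iterations the algorithm converges: w^S lists the bids c in strictly decreasing order (w^S_j is the j-th largest bid) and v^S lists the corresponding agent indices (v^S_j is the index of the agent with the j-th largest bid). -/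
open Finset

/-- The set of agents proposing themselves at position `j` in one iteration of
CBAA-M: agents `i` whose index does not yet appear in the list `v`, and for
which `j` is the least position whose current winning bid `w j` is beaten by
the bid `c i`. -/
noncomputable def cbaamProposers {S : ℕ} (c : Fin S → ℝ)
    (v : Fin S → Option (Fin S)) (w : Fin S → ℝ) (j : Fin S) : Finset (Fin S) :=
  letI := Classical.dec
  Finset.univ.filter fun i =>
    (∀ l, v l ≠ some i) ∧ w j < c i ∧ ∀ l, l < j → ¬ w l < c i

/-- One iteration of CBAA-M over a fully connected graph (so all agents share
the same state): at every position `j`, the new winning bid is the maximum of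
the old one and the bids proposed at `j`, and the new index entry is the index
of the corresponding maximizing agent (unchanged if there is no proposal at
`j`, every proposal at `j` exceeding `w j` by construction). -/
noncomputable def cbaamStep {S : ℕ} (c : Fin S → ℝ)
    (s : (Fin S → Option (Fin S)) × (Fin S → ℝ)) :
    (Fin S → Option (Fin S)) × (Fin S → ℝ) :=
  ( fun j =>
      if h : (cbaamProposers c s.1 s.2 j).Nonempty then
        some (Classical.choose ((cbaamProposers c s.1 s.2 j).exists_max_image c h))
      else s.1 j,
    fun j => (cbaamProposers c s.1 s.2 j).fold max (s.2 j) c )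

/-- The shared CBAA-M state `(v^κ, w^κ)` after `κ` iterations, initialized as
`v^0 = w^0 = 0` (no index assigned, all bids zero). -/
noncomputable def cbaam {S : ℕ} (c : Fin S → ℝ) (κ : ℕ) :
    (Fin S → Option (Fin S)) × (Fin S → ℝ) :=
  (cbaamStep c)^[κ] (fun _ => none, fun _ => 0)

noncomputable def st {S : ℕ} (c : Fin S → ℝ) (σ : Equiv.Perm (Fin S)) (κ : ℕ) :
    (Fin S → Option (Fin S)) × (Fin S → ℝ) :=
  (fun j => if (j:ℕ) < κ then some (σ j) else none,
   fun j => if (j:ℕ) < κ then c (σ j) else 0)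


lemma proposers_eq {S : ℕ} (c : Fin S → ℝ) (σ : Equiv.Perm (Fin S))
    (hpos : ∀ i, 0 < c i) (hanti : StrictAnti (c ∘ σ))
    (κ : ℕ) (hκ : κ < S) (j : Fin S) :
    cbaamProposers c (st c σ κ).1 (st c σ κ).2 j =
      (if (j:ℕ) = κ then (Finset.univ.filter fun i => κ ≤ ((σ.symm i : Fin S) : ℕ)) else ∅) := by
  classical
  have keyA : ∀ i : Fin S, (∀ l : Fin S, (st c σ κ).1 l ≠ some i) ↔ κ ≤ (σ.symm i : ℕ) := by
    intro i
    constructor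
    · intro h
      by_contra hlt
      push_neg at hlt
      have := h (σ.symm i)
      simp [st, hlt] at this
    · intro h l hl
      simp only [st] at hl
      by_cases h1 : (l:ℕ) < κ
      · rw [if_pos h1] at hl
        have h2 : σ l = i := by simpa using hl
        have h3 : σ.symm i = l := by simp [← h2]
        rw [h3] at h
        omega
      · rw [if_neg h1] at hl
        simp at hl
  ext i
  simp only [cbaamProposers, Finset.mem_filter, Finset.mem_univ, true_and]
  split_ifs with hj
  · simp only [Finset.mem_filter, Finset.mem_univ, true_and]
    constructor
    · rintro ⟨hA, _, _⟩
      exact (keyA i).1 hA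
    · intro h
      refine ⟨(keyA i).2 h, ?_, ?_⟩
      · have : ¬ ((j:ℕ) < κ) := by omega
        simp [st, this, hpos i]
      · intro l hl
        have hlκ : (l:ℕ) < κ := by
          have := (Fin.lt_iff_val_lt_val.mp hl); omega
        simp only [st, if_pos hlκ]
        have hlsym : l < σ.symm i := by
          rw [Fin.lt_iff_val_lt_val]; omega
        have : c (σ (σ.symm i)) < c (σ l) := hanti hlsym
        simp at this
        linarith
  · simp only [Finset.notMem_empty, iff_false]
    rintro ⟨hA, hB, hC⟩
    have hi := (keyA i).1 hA
    rcases lt_or_gt_of_ne hj with h1 | h1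
    · -- j < κ : B contradicts ordering
      simp only [st, if_pos h1] at hB
      have hjsym : j < σ.symm i := by rw [Fin.lt_iff_val_lt_val]; omega
      have : c (σ (σ.symm i)) < c (σ j) := hanti hjsym
      simp at this
      linarith
    · -- κ < j : C fails at position κ
      have := hC ⟨κ, hκ⟩ (by rw [Fin.lt_iff_val_lt_val]; exact h1)
      have hκκ : ¬ ((κ:ℕ) < κ) := lt_irrefl κ
      simp [st] at this
      exact this.not_gt (hpos i)

lemma step_eq {S : ℕ} (c : Fin S → ℝ) (σ : Equiv.Perm (Fin S))
    (hpos : ∀ i, 0 < c i) (hdist : Function.Injective c) (hanti : StrictAnti (c ∘ σ))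
    (κ : ℕ) (hκ : κ < S) :
    cbaamStep c (st c σ κ) = st c σ (κ + 1) := by
  classical
  set R : Finset (Fin S) := Finset.univ.filter (fun i => κ ≤ ((σ.symm i : Fin S) : ℕ)) with hR
  have hmem : σ ⟨κ, hκ⟩ ∈ R := by simp [hR]
  have hub : ∀ i ∈ R, c i ≤ c (σ ⟨κ, hκ⟩) := by
    intro i hi
    simp only [hR, Finset.mem_filter] at hi
    have hle : (⟨κ, hκ⟩ : Fin S) ≤ σ.symm i := by rw [Fin.le_iff_val_le_val]; exact hi.2
    have h2 := hanti.antitone hle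
    simpa using h2
  have hP := proposers_eq c σ hpos hanti κ hκ
  have hP' : ∀ j : Fin S, cbaamProposers c (st c σ κ).1 (st c σ κ).2 j =
      (if (j : ℕ) = κ then R else ∅) := hP
  have hw : ∀ j : Fin S, (st c σ (κ + 1)).2 j =
      (if (j : ℕ) = κ then c (σ ⟨κ, hκ⟩) else (st c σ κ).2 j) := by
    intro j
    by_cases hj : (j : ℕ) = κ
    · have hj' : j = ⟨κ, hκ⟩ := Fin.ext hj
      simp [st, hj', hj]
    · simp only [st, if_neg hj]
      by_cases h1 : (j : ℕ) < κ
      · rw [if_pos h1, if_pos (by omega : (j : ℕ) < κ + 1)]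
      · rw [if_neg h1, if_neg (by omega : ¬ (j : ℕ) < κ + 1)]
  have hv : ∀ j : Fin S, (st c σ (κ + 1)).1 j =
      (if (j : ℕ) = κ then some (σ ⟨κ, hκ⟩) else (st c σ κ).1 j) := by
    intro j
    by_cases hj : (j : ℕ) = κ
    · have hj' : j = ⟨κ, hκ⟩ := Fin.ext hj
      simp [st, hj', hj]
    · simp only [st, if_neg hj]
      by_cases h1 : (j : ℕ) < κ
      · rw [if_pos h1, if_pos (by omega : (j : ℕ) < κ + 1)]
      · rw [if_neg h1, if_neg (by omega : ¬ (j : ℕ) < κ + 1)]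
  refine Prod.ext ?_ ?_
  · funext j
    rw [hv j]
    show (if h : (cbaamProposers c (st c σ κ).1 (st c σ κ).2 j).Nonempty then
        some (Classical.choose
          ((cbaamProposers c (st c σ κ).1 (st c σ κ).2 j).exists_max_image c h))
      else (st c σ κ).1 j) = _
    by_cases hj : (j : ℕ) = κ
    · have hset : cbaamProposers c (st c σ κ).1 (st c σ κ).2 j = R := by
        rw [hP' j, if_pos hj]
      have hne : (cbaamProposers c (st c σ κ).1 (st c σ κ).2 j).Nonempty :=
        ⟨σ ⟨κ, hκ⟩, hset ▸ hmem⟩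
      rw [dif_pos hne, if_pos hj]
      obtain ⟨hx1, hx2⟩ := Classical.choose_spec
        ((cbaamProposers c (st c σ κ).1 (st c σ κ).2 j).exists_max_image c hne)
      congr 1
      apply hdist
      refine le_antisymm (hub _ (hset ▸ hx1)) (hx2 _ ?_)
      rw [hset]; exact hmem
    · have hset : cbaamProposers c (st c σ κ).1 (st c σ κ).2 j = ∅ := by
        rw [hP' j, if_neg hj]
      rw [dif_neg (by rw [hset]; exact Finset.not_nonempty_empty), if_neg hj]
  · funext j
    rw [hw j]
    show (cbaamProposers c (st c σ κ).1 (st c σ κ).2 j).fold max ((st c σ κ).2 j) c = _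
    rw [hP' j]
    by_cases hj : (j : ℕ) = κ
    · rw [if_pos hj, if_pos hj]
      have hb : (st c σ κ).2 j = 0 := by simp [st, hj]
      rw [hb]
      apply le_antisymm
      · rw [Finset.fold_max_le]
        exact ⟨le_of_lt (hpos _), hub⟩
      · rw [Finset.le_fold_max]
        exact Or.inr ⟨σ ⟨κ, hκ⟩, hmem, le_refl _⟩
    · rw [if_neg hj, Finset.fold_empty, if_neg hj]

/-- With `S > 1` agents holding pairwise distinct positive bids,
CBAA-M over a fully connected graph converges in exactly `S` iterations:
`w^S` lists the bids in strictly decreasing order and `v^S` the corresponding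
agent indices. -/
theorem cbaam_converges_in_S_iterations
    (S : ℕ) (hS : 1 < S) (c : Fin S → ℝ)
    (hpos : ∀ i, 0 < c i) (hdist : Function.Injective c) :
    ∃ σ : Equiv.Perm (Fin S),
      StrictAnti (c ∘ σ) ∧
      (∀ j, (cbaam c S).2 j = c (σ j)) ∧
      (∀ j, (cbaam c S).1 j = some (σ j)) := by
  classical
  set τ := Tuple.sort c with hτ
  have hsm : StrictMono (c ∘ τ) :=
    (Tuple.monotone_sort c).strictMono_of_injective (hdist.comp τ.injective)
  set σ : Equiv.Perm (Fin S) := Fin.revPerm.trans τ with hσ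
  have hanti : StrictAnti (c ∘ σ) := by
    intro a b hab
    show c (τ (Fin.revPerm b)) < c (τ (Fin.revPerm a))
    exact hsm (by simpa using hab)
  have hst : ∀ κ, κ ≤ S → cbaam c κ = st c σ κ := by
    intro κ
    induction κ with
    | zero =>
      intro _
      refine Prod.ext ?_ ?_ <;> funext j <;> simp [cbaam, st]
    | succ n ih =>
      intro hn
      have hn' : n < S := hn
      rw [cbaam, Function.iterate_succ_apply', ← cbaam, ih (le_of_lt hn'),
        step_eq c σ hpos hdist hanti n hn']
  refine ⟨σ, hanti, ?_, ?_⟩ <;> intro j <;> rw [hst S le_rfl] <;> simp [st, j.isLt]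
end

section
/- Consider S > 1 agents with pairwise distinct positive bids c : Fin S → ℝ running the CBAA-M algorithm over a fully connected communication graph, with shared state (v^κ, w^κ) updated as follows from v^0 = w^0 = 0: at iteration κ, each agent i whose index does not yet appear in v^{κ-1} proposes itself at the least position j such that c i > w^{κ-1}_j; then, for every position j, w^κ_j is set to the maximum of w^{κ-1}_j and all bids c i proposed at position j, and v^κ_j to the index of the corresponding maximizing agent. Then for every iteration 0 ≤ κ ≤ S, the first κ entries of w^κ are exactly the κ largest bids arranged in strictly decreasing order (with v^κ holding the corresponding agent indices), and the remaining S − κ entries of w^κ are 0. -/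
open Finset

lemma cbaam_mem_proposers {S : ℕ} (c : Fin S → ℝ) (v : Fin S → Option (Fin S))
    (w : Fin S → ℝ) (j i : Fin S) :
    i ∈ cbaamProposers c v w j ↔
      (∀ l, v l ≠ some i) ∧ w j < c i ∧ ∀ l, l < j → ¬ w l < c i := by
  classical
  simp [cbaamProposers]

lemma cbaam_strong (S : ℕ) (c : Fin S → ℝ)
    (hpos : ∀ i, 0 < c i) (hdist : Function.Injective c) :
    ∀ κ : ℕ, κ ≤ S →
      ∃ f : Fin S → Fin S,
        (∀ j : Fin S, (j : ℕ) < κ →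
          (cbaam c κ).2 j = c (f j) ∧ (cbaam c κ).1 j = some (f j)) ∧
        (∀ j l : Fin S, (j : ℕ) < κ → (l : ℕ) < κ → j < l → c (f l) < c (f j)) ∧
        (∀ i : Fin S, (∀ j : Fin S, (j : ℕ) < κ → f j ≠ i) →
          ∀ j : Fin S, (j : ℕ) < κ → c i < c (f j)) ∧
        (∀ j : Fin S, κ ≤ (j : ℕ) →
          (cbaam c κ).2 j = 0 ∧ (cbaam c κ).1 j = none) := by
  intro κ
  induction κ with
  | zero =>
    intro _
    exact ⟨fun j => j, by simp, by simp, by simp, by intro j _; simp [cbaam]⟩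
  | succ κ ih =>
    intro hκ1
    have hκ : κ < S := hκ1
    obtain ⟨f, ha, hb, hc, hd⟩ := ih hκ.le
    set v := (cbaam c κ).1 with hv
    set w := (cbaam c κ).2 with hw
    set jκ : Fin S := ⟨κ, hκ⟩ with hjκ
    have hassign : ∀ i : Fin S,
        (∀ l, v l ≠ some i) ↔ (∀ j : Fin S, (j : ℕ) < κ → f j ≠ i) := by
      intro i
      constructor
      · intro h j hj hfj
        exact h j (by rw [(ha j hj).2, hfj])
      · intro h l
        rcases lt_or_ge (l : ℕ) κ with hl | hl
        · rw [(ha l hl).2]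
          intro he
          exact h l hl (Option.some.inj he)
        · rw [(hd l hl).2]
          simp
    have hmemκ : ∀ i : Fin S,
        i ∈ cbaamProposers c v w jκ ↔ (∀ j : Fin S, (j : ℕ) < κ → f j ≠ i) := by
      intro i
      rw [cbaam_mem_proposers]
      constructor
      · intro h; exact (hassign i).mp h.1
      · intro h
        refine ⟨(hassign i).mpr h, ?_, ?_⟩
        · rw [(hd jκ le_rfl).1]; exact hpos i
        · intro l hl
          have hl' : (l : ℕ) < κ := hl
          rw [(ha l hl').1]
          exact not_lt.mpr (hc i h l hl').le
    have hPe : ∀ p : Fin S, p ≠ jκ → cbaamProposers c v w p = ∅ := by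
      intro p hp
      rw [Finset.eq_empty_iff_forall_notMem]
      intro i hi
      rw [cbaam_mem_proposers] at hi
      obtain ⟨h1, h2, h3⟩ := hi
      have hun := (hassign i).mp h1
      rcases lt_trichotomy (p : ℕ) κ with hpl | hpe | hpg
      · rw [(ha p hpl).1] at h2
        exact absurd h2 (not_lt.mpr (hc i hun p hpl).le)
      · exact hp (Fin.ext hpe)
      · have hlt : jκ < p := hpg
        have h4 := h3 jκ hlt
        rw [(hd jκ le_rfl).1] at h4
        exact h4 (hpos i)
    have hne : (cbaamProposers c v w jκ).Nonempty := by
      have hT : ((univ.filter (fun j : Fin S => (j : ℕ) < κ)).image f).card < S := by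
        calc ((univ.filter (fun j : Fin S => (j : ℕ) < κ)).image f).card
            ≤ (univ.filter (fun j : Fin S => (j : ℕ) < κ)).card := Finset.card_image_le
          _ = (Finset.Iio jκ).card := by
              congr 1
              ext j
              simp only [Finset.mem_filter, Finset.mem_univ, true_and, Finset.mem_Iio]; exact Iff.rfl
          _ = κ := by simp [hjκ]
          _ < S := hκ
      obtain ⟨i, hi⟩ : ∃ i : Fin S,
          i ∉ (univ.filter (fun j : Fin S => (j : ℕ) < κ)).image f := by
        by_contra hcon
        push_neg at hcon
        have hsub : (univ : Finset (Fin S)) ⊆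
            (univ.filter (fun j : Fin S => (j : ℕ) < κ)).image f := fun i _ => hcon i
        have hcard := Finset.card_le_card hsub
        simp at hcard
        omega
      refine ⟨i, (hmemκ i).mpr ?_⟩
      intro j hj hfj
      exact hi (Finset.mem_image.mpr ⟨j, by simp [hj], hfj⟩)
    set istar := Classical.choose ((cbaamProposers c v w jκ).exists_max_image c hne)
      with histar
    obtain ⟨hmem, hmax⟩ :=
      Classical.choose_spec ((cbaamProposers c v w jκ).exists_max_image c hne)
    rw [← histar] at hmem hmax
    have hstep : cbaam c (κ + 1) = cbaamStep c (cbaam c κ) :=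
      Function.iterate_succ_apply' _ _ _
    have hw' : ∀ p : Fin S,
        (cbaam c (κ + 1)).2 p = (cbaamProposers c v w p).fold max (w p) c := by
      intro p; rw [hstep]; rfl
    have hv' : ∀ p : Fin S, p ≠ jκ → (cbaam c (κ + 1)).1 p = v p := by
      intro p hp
      rw [hstep]
      show (if h : (cbaamProposers c v w p).Nonempty then
          some (Classical.choose ((cbaamProposers c v w p).exists_max_image c h))
        else v p) = v p
      rw [dif_neg]
      rw [hPe p hp]
      exact Finset.not_nonempty_empty
    have hvκ : (cbaam c (κ + 1)).1 jκ = some istar := by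
      rw [hstep]
      show (if h : (cbaamProposers c v w jκ).Nonempty then
          some (Classical.choose ((cbaamProposers c v w jκ).exists_max_image c h))
        else v jκ) = some istar
      rw [dif_pos hne]
    have hwκ : (cbaam c (κ + 1)).2 jκ = c istar := by
      rw [hw' jκ]
      apply le_antisymm
      · rw [Finset.fold_max_le]
        refine ⟨?_, fun x hx => hmax x hx⟩
        rw [(hd jκ le_rfl).1]
        exact (hpos istar).le
      · exact (Finset.le_fold_max _).mpr (Or.inr ⟨istar, hmem, le_rfl⟩)
    have hwp : ∀ p : Fin S, p ≠ jκ → (cbaam c (κ + 1)).2 p = w p := by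
      intro p hp
      rw [hw' p, hPe p hp, Finset.fold_empty]
    have hustar : ∀ j : Fin S, (j : ℕ) < κ → f j ≠ istar := (hmemκ istar).mp hmem
    refine ⟨fun j => if (j : ℕ) < κ then f j else istar, ?_, ?_, ?_, ?_⟩
    · intro j hj
      rcases lt_or_ge (j : ℕ) κ with hjl | hjg
      · have hpne : j ≠ jκ := by
          intro h; rw [h] at hjl; exact absurd hjl (lt_irrefl κ)
        simp only [if_pos hjl]
        rw [hwp j hpne, hv' j hpne]
        exact ⟨(ha j hjl).1, (ha j hjl).2⟩
      · have hje : (j : ℕ) = κ := by omega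
        have hj' : j = jκ := Fin.ext hje
        simp only [if_neg (by omega : ¬ (j : ℕ) < κ)]
        rw [hj', hwκ, hvκ]
        exact ⟨rfl, rfl⟩
    · intro j l hj hl hjl
      rcases lt_or_ge (l : ℕ) κ with hll | hlg
      · have hjj : (j : ℕ) < κ := lt_trans hjl hll
        simp only [if_pos hll, if_pos hjj]
        exact hb j l hjj hll hjl
      · have hle : (l : ℕ) = κ := by omega
        have hjj : (j : ℕ) < κ := by
          have := Fin.lt_def.mp hjl; omega
        simp only [if_neg (by omega : ¬ (l : ℕ) < κ), if_pos hjj]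
        exact hc istar hustar j hjj
    · intro i hi j hj
      have hi' : ∀ j : Fin S, (j : ℕ) < κ → f j ≠ i := by
        intro j' hj' he
        have h5 := hi j' (Nat.lt_succ_of_lt hj')
        simp only [if_pos hj'] at h5
        exact h5 he
      have histar_ne : istar ≠ i := by
        have h5 := hi jκ (by simp [hjκ])
        simpa only [if_neg (show ¬ ((jκ : Fin S) : ℕ) < κ by simp [hjκ])] using h5
      rcases lt_or_ge (j : ℕ) κ with hjl | hjg
      · simp only [if_pos hjl]
        exact hc i hi' j hjl
      · simp only [if_neg (show ¬ (j : ℕ) < κ by omega)]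
        have hmem_i : i ∈ cbaamProposers c v w jκ := (hmemκ i).mpr hi'
        have hle := hmax i hmem_i
        rcases lt_or_eq_of_le hle with h | h
        · exact h
        · exact absurd (hdist h) (fun he => histar_ne he.symm)
    · intro j hj
      have hpne : j ≠ jκ := by
        intro h
        rw [h] at hj
        simp [hjκ] at hj
      rw [hwp j hpne, hv' j hpne]
      exact ⟨(hd j (by omega)).1, (hd j (by omega)).2⟩

/-- With `S > 1` agents holding pairwise distinct positive bids,
after every iteration `κ ≤ S` of CBAA-M the first `κ` entries of `w^κ` are
exactly the `κ` largest bids in strictly decreasing order, `v^κ` holds the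
corresponding agent indices in its first `κ` entries, and the remaining
`S − κ` entries of `w^κ` are `0`. -/
theorem cbaam_invariant_each_iteration
    (S : ℕ) (hS : 1 < S) (c : Fin S → ℝ)
    (hpos : ∀ i, 0 < c i) (hdist : Function.Injective c) :
    ∀ κ : ℕ, κ ≤ S →
      ∃ f : Fin S → Fin S,
        -- the first κ entries record agents `f j` with their bids
        (∀ j : Fin S, (j : ℕ) < κ →
          (cbaam c κ).2 j = c (f j) ∧ (cbaam c κ).1 j = some (f j)) ∧
        -- these bids are arranged in strictly decreasing order
        (∀ j l : Fin S, (j : ℕ) < κ → (l : ℕ) < κ → j < l → c (f l) < c (f j)) ∧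
        -- they are exactly the κ largest bids: any agent not listed among the
        -- first κ winners bids strictly less than each of them
        (∀ i : Fin S, (∀ j : Fin S, (j : ℕ) < κ → f j ≠ i) →
          ∀ j : Fin S, (j : ℕ) < κ → c i < c (f j)) ∧
        -- the remaining S − κ entries of w^κ are 0
        (∀ j : Fin S, κ ≤ (j : ℕ) → (cbaam c κ).2 j = 0) := by
  intro κ hκ
  obtain ⟨f, h1, h2, h3, h4⟩ := cbaam_strong S c hpos hdist κ hκ
  exact ⟨f, h1, h2, h3, fun j hj => (h4 j hj).1⟩
end
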